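/- Let n ≥ 2, let Φ₁, …, Φ_{n-1} be independent random variables uniformly distributed on [0, π/2], and for 1 ≤ j ≤ n−1 define Λ_j = cos²(Φ_j)·∏_{i=1}^{j-1} sin²(Φ_i) and F_j = E[Λ_j · ln Λ_j]. Let a = ln 2 − 1/2. Then for every j with 1 ≤ j+1 ≤ n−1, the recursion F_{j+1} = F_j/2 − a/2^j holds. -/

import Mathlib

open MeasureTheory Real

/-- The uniform probability measure on the interval `[0, π/2]`. -/
noncomputable def uniformHalfPi : Measure ℝ :=
  ENNReal.ofReal (2 / Real.pi) • volume.restrict (Set.Icc 0 (Real.pi / 2))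

/-- The eigenvalue `Λ` with 0-based index `j`:
`Λ_j(φ) = cos²(φ j) ∏_{i<j} sin²(φ i)`. -/
noncomputable def Lam (m : ℕ) (j : Fin m) (φ : Fin m → ℝ) : ℝ :=
  Real.cos (φ j) ^ 2 * ∏ i ∈ Finset.univ.filter (fun i : Fin m => i < j), Real.sin (φ i) ^ 2

/-- The expectation `F_j = E[Λ_j ln Λ_j]` (0-based index `j`) with respect to the product of
uniform measures on `[0, π/2]`, modelling independent uniform spherical coordinates. -/
noncomputable def Fexp (m : ℕ) (j : Fin m) : ℝ :=
  ∫ φ : Fin m → ℝ, Lam m j φ * Real.log (Lam m j φ)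
    ∂(Measure.pi fun _ : Fin m => uniformHalfPi)


section AuxProofs
open intervalIntegral Set

lemma intInt_neg_log_01 : IntervalIntegrable (fun x => -Real.log x) volume 0 1 := by
  have hcont : ContinuousOn (fun x : ℝ => x - x * Real.log x) (Icc 0 1) :=
    (continuous_id.sub Real.continuous_mul_log).continuousOn
  have hderiv : ∀ x ∈ Ioo (0:ℝ) 1, HasDerivAt (fun x : ℝ => x - x * Real.log x) (-Real.log x) x := by
    intro x hx
    have h := (Real.hasDerivAt_mul_log (ne_of_gt hx.1))
    have := (hasDerivAt_id x).sub h
    exact this.congr_deriv (by ring)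
  have hpos : ∀ x ∈ Ioo (0:ℝ) 1, 0 ≤ -Real.log x := by
    intro x hx
    simpa using Real.log_nonpos hx.1.le hx.2.le
  have := integrableOn_deriv_of_nonneg hcont hderiv hpos
  rw [intervalIntegrable_iff_integrableOn_Ioc_of_le zero_le_one]
  exact this

lemma intInt_log_01 : IntervalIntegrable Real.log volume 0 1 := by
  have h := intInt_neg_log_01.neg
  convert h using 1
  ext x; simp

lemma intInt_log : IntervalIntegrable Real.log volume 0 (Real.pi/2) := by
  apply intInt_log_01.trans
  apply ContinuousOn.intervalIntegrable
  intro x hx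
  apply Real.continuousAt_log ?_ |>.continuousWithinAt
  have : (1:ℝ) ≤ Real.pi/2 := by nlinarith [Real.pi_gt_three]
  simp [Set.uIcc_of_le this] at hx
  intro h; rw [h] at hx; linarith [hx.1]

lemma intInt_log_sin : IntervalIntegrable (fun x => Real.log (Real.sin x)) volume 0 (Real.pi/2) := by
  have hpi : (0:ℝ) < Real.pi/2 := by positivity
  apply IntervalIntegrable.mono_fun' (g := fun x => -Real.log x + Real.log (Real.pi/2))
  · exact intInt_log.neg.add (intervalIntegrable_const)
  · exact ((Real.measurable_log.comp Real.measurable_sin).aestronglyMeasurable)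
  · rw [Filter.EventuallyLE, ae_restrict_iff' measurableSet_uIoc]
    refine Filter.Eventually.of_forall (fun x hx => ?_)
    rw [Set.uIoc_of_le hpi.le] at hx
    have hx0 : 0 < x := hx.1
    have hx2 : x ≤ Real.pi/2 := hx.2
    have hsin : 2/Real.pi * x ≤ Real.sin x := Real.mul_le_sin hx0.le hx2
    have hsinpos : 0 < Real.sin x := lt_of_lt_of_le (by positivity) hsin
    have h1 : Real.log (Real.sin x) ≤ 0 := Real.log_nonpos hsinpos.le (Real.sin_le_one x)
    have h2 : Real.log (2/Real.pi * x) ≤ Real.log (Real.sin x) :=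
      Real.log_le_log (by positivity) hsin
    rw [Real.log_mul (by positivity) hx0.ne'] at h2
    have h3 : Real.log (2/Real.pi) = -Real.log (Real.pi/2) := by
      rw [← Real.log_inv]; norm_num
    simp only [Real.norm_eq_abs, abs_of_nonpos h1]
    linarith

lemma intInt_log_cos : IntervalIntegrable (fun x => Real.log (Real.cos x)) volume 0 (Real.pi/2) := by
  have h := (intInt_log_sin.comp_sub_left (Real.pi/2)).symm
  simp only [sub_self, sub_zero] at h
  have : (fun x => Real.log (Real.sin (Real.pi/2 - x))) = fun x => Real.log (Real.cos x) := by
    ext x; rw [Real.sin_pi_div_two_sub]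
  rwa [this] at h

lemma integral_log_cos_eq : (∫ x in (0:ℝ)..(Real.pi/2), Real.log (Real.cos x))
    = ∫ x in (0:ℝ)..(Real.pi/2), Real.log (Real.sin x) := by
  have h := intervalIntegral.integral_comp_sub_left (a := (0:ℝ)) (b := Real.pi/2)
    (fun x => Real.log (Real.sin x)) (Real.pi/2)
  simp only [sub_self, sub_zero, Real.sin_pi_div_two_sub] at h
  rw [h]

lemma intInt_log_sin' : IntervalIntegrable (fun x => Real.log (Real.sin x)) volume (Real.pi/2) Real.pi := by
  have h := (intInt_log_sin.comp_sub_left Real.pi).symm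
  simp only [sub_zero] at h
  have e : Real.pi - Real.pi/2 = Real.pi/2 := by ring
  rw [e] at h
  have : (fun x => Real.log (Real.sin (Real.pi - x))) = fun x => Real.log (Real.sin x) := by
    ext x; rw [Real.sin_pi_sub]
  rwa [this] at h

lemma integral_log_sin_half : (∫ x in (Real.pi/2)..Real.pi, Real.log (Real.sin x))
    = ∫ x in (0:ℝ)..(Real.pi/2), Real.log (Real.sin x) := by
  have h := intervalIntegral.integral_comp_sub_left (a := (0:ℝ)) (b := Real.pi/2)
    (fun x => Real.log (Real.sin x)) Real.pi
  simp only [sub_zero, Real.sin_pi_sub] at h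
  have e : Real.pi - Real.pi/2 = Real.pi/2 := by ring
  rw [e] at h
  rw [← h]

lemma integral_log_sin_eq : (∫ x in (0:ℝ)..(Real.pi/2), Real.log (Real.sin x))
    = -(Real.pi/2) * Real.log 2 := by
  set I := ∫ x in (0:ℝ)..(Real.pi/2), Real.log (Real.sin x) with hI
  have hpi : (0:ℝ) < Real.pi/2 := by positivity
  -- doubling substitution
  have h1 : (∫ x in (0:ℝ)..(Real.pi/2), Real.log (Real.sin (2*x)))
      = (2:ℝ)⁻¹ • ∫ x in (0:ℝ)..Real.pi, Real.log (Real.sin x) := by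
    have := intervalIntegral.integral_comp_mul_left (a := (0:ℝ)) (b := Real.pi/2)
      (fun x => Real.log (Real.sin x)) (c := (2:ℝ)) (by norm_num)
    simpa [mul_zero, mul_div_cancel₀] using this
  have h2 : (∫ x in (0:ℝ)..Real.pi, Real.log (Real.sin x)) = 2 * I := by
    rw [← intervalIntegral.integral_add_adjacent_intervals intInt_log_sin intInt_log_sin',
      integral_log_sin_half]
    ring
  -- pointwise a.e. identity
  have h3 : (∫ x in (0:ℝ)..(Real.pi/2), Real.log (Real.sin (2*x)))
      = ∫ x in (0:ℝ)..(Real.pi/2), (Real.log 2 + (Real.log (Real.sin x) + Real.log (Real.cos x))) := by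
    apply intervalIntegral.integral_congr_ae
    have hne : ∀ᵐ x : ℝ, x ≠ Real.pi/2 :=
      ae_iff.2 (by simpa using volume_singleton (a := Real.pi/2))
    filter_upwards [hne] with x hxne hx
    rw [Set.uIoc_of_le hpi.le] at hx
    have hx0 : 0 < x := hx.1
    have hx2 : x < Real.pi/2 := lt_of_le_of_ne hx.2 hxne
    have hs : 0 < Real.sin x := Real.sin_pos_of_pos_of_lt_pi hx0 (by linarith [Real.pi_gt_three])
    have hc : 0 < Real.cos x := Real.cos_pos_of_mem_Ioo ⟨by linarith, hx2⟩
    rw [Real.sin_two_mul, Real.log_mul (by positivity) hc.ne', Real.log_mul (by norm_num) hs.ne']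
    ring
  have h4 : (∫ x in (0:ℝ)..(Real.pi/2), (Real.log 2 + (Real.log (Real.sin x) + Real.log (Real.cos x))))
      = Real.pi/2 * Real.log 2 + (I + I) := by
    rw [intervalIntegral.integral_add intervalIntegrable_const (intInt_log_sin.add intInt_log_cos),
      intervalIntegral.integral_add intInt_log_sin intInt_log_cos, integral_log_cos_eq]
    simp [hI]
  have := h3
  rw [h1, h2, h4] at this
  have : I = Real.pi/2 * Real.log 2 + 2*I := by
    rw [smul_eq_mul] at this; linarith
  linarith

lemma integral_cos_two_mul_log_cos :
    (∫ x in (0:ℝ)..(Real.pi/2), Real.cos (2*x) * Real.log (Real.cos x)) = Real.pi/4 := by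
  have hpi : (0:ℝ) ≤ Real.pi/2 := by positivity
  set G : ℝ → ℝ := fun x => Real.sin x * (Real.cos x * Real.log (Real.cos x))
      + (x - Real.sin x * Real.cos x)/2 with hG
  have hcont : ContinuousOn G (Set.Icc 0 (Real.pi/2)) := by
    apply Continuous.continuousOn
    exact (Real.continuous_sin.mul (Real.continuous_mul_log.comp Real.continuous_cos)).add
      ((continuous_id.sub (Real.continuous_sin.mul Real.continuous_cos)).div_const 2)
  have hderiv : ∀ x ∈ Set.Ioo (0:ℝ) (Real.pi/2),
      HasDerivWithinAt G (Real.cos (2*x) * Real.log (Real.cos x)) (Set.Ioi x) x := by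
    intro x hx
    have hc : 0 < Real.cos x := Real.cos_pos_of_mem_Ioo ⟨by linarith [hx.1], hx.2⟩
    have hml : HasDerivAt (fun t : ℝ => t * Real.log t) (Real.log (Real.cos x) + 1) (Real.cos x) :=
      Real.hasDerivAt_mul_log hc.ne'
    have h1 : HasDerivAt (fun y => Real.cos y * Real.log (Real.cos y))
        ((Real.log (Real.cos x) + 1) * (-Real.sin x)) x :=
      hml.comp x (Real.hasDerivAt_cos x)
    have h2 : HasDerivAt (fun y => Real.sin y * (Real.cos y * Real.log (Real.cos y)))
        (Real.cos x * (Real.cos x * Real.log (Real.cos x))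
          + Real.sin x * ((Real.log (Real.cos x) + 1) * (-Real.sin x))) x :=
      (Real.hasDerivAt_sin x).mul h1
    have h3 : HasDerivAt (fun y : ℝ => (y - Real.sin y * Real.cos y)/2)
        ((1 - (Real.cos x * Real.cos x + Real.sin x * (-Real.sin x)))/2) x :=
      ((hasDerivAt_id x).sub ((Real.hasDerivAt_sin x).mul (Real.hasDerivAt_cos x))).div_const 2
    have h4 := h2.add h3
    have : Real.cos x * (Real.cos x * Real.log (Real.cos x))
          + Real.sin x * ((Real.log (Real.cos x) + 1) * (-Real.sin x))
          + (1 - (Real.cos x * Real.cos x + Real.sin x * (-Real.sin x)))/2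
        = Real.cos (2*x) * Real.log (Real.cos x) := by
      rw [Real.cos_two_mul]
      have hs : Real.sin x ^ 2 = 1 - Real.cos x ^ 2 := Real.sin_sq x
      linear_combination (-(Real.log (Real.cos x) + 1/2)) * hs
    rw [this] at h4
    exact h4.hasDerivWithinAt
  have hint : IntervalIntegrable (fun x => Real.cos (2*x) * Real.log (Real.cos x)) volume 0 (Real.pi/2) :=
    intInt_log_cos.continuousOn_mul (Continuous.continuousOn (by continuity))
  have := intervalIntegral.integral_eq_sub_of_hasDeriv_right_of_le hpi hcont hderiv hint
  rw [this, hG]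
  simp [Real.cos_pi_div_two, Real.sin_pi_div_two, Real.log_zero]
  ring

lemma integral_cos_sq_log : (∫ x in (0:ℝ)..(Real.pi/2), Real.cos x ^ 2 * Real.log (Real.cos x ^ 2))
    = Real.pi/4 - Real.pi/2 * Real.log 2 := by
  have hpt : ∀ x : ℝ, Real.cos x ^ 2 * Real.log (Real.cos x ^ 2)
      = Real.log (Real.cos x) + Real.cos (2*x) * Real.log (Real.cos x) := by
    intro x
    rw [Real.log_pow, Real.cos_two_mul]
    push_cast
    ring
  simp only [hpt]
  rw [intervalIntegral.integral_add intInt_log_cos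
    (intInt_log_cos.continuousOn_mul (Continuous.continuousOn (by continuity))),
    integral_cos_two_mul_log_cos, integral_log_cos_eq, integral_log_sin_eq]
  ring

lemma integral_sin_sq_log : (∫ x in (0:ℝ)..(Real.pi/2), Real.sin x ^ 2 * Real.log (Real.sin x ^ 2))
    = Real.pi/4 - Real.pi/2 * Real.log 2 := by
  have h := intervalIntegral.integral_comp_sub_left (a := (0:ℝ)) (b := Real.pi/2)
    (fun x => Real.cos x ^ 2 * Real.log (Real.cos x ^ 2)) (Real.pi/2)
  simp only [sub_self, sub_zero, Real.cos_pi_div_two_sub] at h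
  rw [h, integral_cos_sq_log]


instance uniformHalfPi_prob : IsProbabilityMeasure uniformHalfPi := by
  constructor
  rw [uniformHalfPi, Measure.smul_apply, Measure.restrict_apply MeasurableSet.univ,
    Set.univ_inter, Real.volume_Icc]
  have hpi : (0:ℝ) < Real.pi := Real.pi_pos
  rw [smul_eq_mul, ← ENNReal.ofReal_mul (by positivity)]
  norm_num

lemma integral_uniformHalfPi (f : ℝ → ℝ) :
    ∫ x, f x ∂uniformHalfPi = (2/Real.pi) * ∫ x in (0:ℝ)..(Real.pi/2), f x := by
  have h1 : ∫ x, f x ∂(volume.restrict (Set.Icc 0 (Real.pi/2))) = ∫ x in Set.Ioc 0 (Real.pi/2), f x :=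
    MeasureTheory.integral_Icc_eq_integral_Ioc
  rw [uniformHalfPi, MeasureTheory.integral_smul_measure, h1, ENNReal.toReal_ofReal (by positivity),
    intervalIntegral.integral_of_le (by positivity), smul_eq_mul]


lemma uhp_cos_sq : ∫ x, Real.cos x ^ 2 ∂uniformHalfPi = 1/2 := by
  rw [integral_uniformHalfPi, integral_cos_sq]
  simp [Real.cos_pi_div_two, Real.sin_pi_div_two]
  field_simp

lemma uhp_sin_sq : ∫ x, Real.sin x ^ 2 ∂uniformHalfPi = 1/2 := by
  rw [integral_uniformHalfPi, integral_sin_sq]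
  simp [Real.cos_pi_div_two, Real.sin_pi_div_two]
  field_simp

lemma uhp_one : ∫ x, (1:ℝ) ∂uniformHalfPi = 1 := by simp

lemma uhp_cos_sq_log : ∫ x, Real.cos x ^ 2 * Real.log (Real.cos x ^ 2) ∂uniformHalfPi
    = 1/2 - Real.log 2 := by
  rw [integral_uniformHalfPi, integral_cos_sq_log]
  have hpi : (0:ℝ) < Real.pi := Real.pi_pos
  field_simp
  ring

lemma uhp_sin_sq_log : ∫ x, Real.sin x ^ 2 * Real.log (Real.sin x ^ 2) ∂uniformHalfPi
    = 1/2 - Real.log 2 := by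
  rw [integral_uniformHalfPi, integral_sin_sq_log]
  have hpi : (0:ℝ) < Real.pi := Real.pi_pos
  field_simp
  ring


def UHP : Type := ℝ
instance : MeasurableSpace UHP := inferInstanceAs (MeasurableSpace ℝ)
noncomputable instance : MeasureSpace UHP := ⟨uniformHalfPi⟩
instance : IsProbabilityMeasure (volume : Measure UHP) := uniformHalfPi_prob
instance : SigmaFinite (volume : Measure UHP) := inferInstance

lemma integral_pi_prod (m : ℕ) (f : Fin m → ℝ → ℝ) :
    (∫ x : Fin m → ℝ, ∏ i, f i (x i) ∂(Measure.pi fun _ : Fin m => uniformHalfPi))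
      = ∏ i, ∫ x, f i x ∂uniformHalfPi :=
  MeasureTheory.integral_fintype_prod_eq_prod (𝕜 := ℝ) (ι := Fin m) (E := fun _ => ℝ) f

lemma prod_mul_log {m : ℕ} (p : Fin m → ℝ) :
    (∏ i, p i) * Real.log (∏ i, p i)
      = ∑ k, ∏ i, (if i = k then p i * Real.log (p i) else p i) := by
  by_cases hz : ∃ i, p i = 0
  · obtain ⟨i0, hi0⟩ := hz
    have hP : (∏ i, p i) = 0 := Finset.prod_eq_zero (Finset.mem_univ i0) hi0
    rw [hP]
    simp only [zero_mul]
    symm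
    apply Finset.sum_eq_zero
    intro k _
    apply Finset.prod_eq_zero (Finset.mem_univ i0)
    by_cases h : i0 = k
    · subst h; simp [hi0]
    · simp [h, hi0]
  · push_neg at hz
    have hlog : Real.log (∏ i, p i) = ∑ i, Real.log (p i) :=
      Real.log_prod (fun i _ => hz i)
    rw [hlog, Finset.mul_sum]
    apply Finset.sum_congr rfl
    intro k _
    rw [← Finset.mul_prod_erase Finset.univ
          (fun i => if i = k then p i * Real.log (p i) else p i) (Finset.mem_univ k),
        ← Finset.mul_prod_erase Finset.univ p (Finset.mem_univ k)]
    rw [Finset.prod_congr rfl (fun i hi => if_neg (Finset.ne_of_mem_erase hi))]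
    simp only [if_pos rfl, if_true, eq_self_iff_true]
    ring


noncomputable def fac {m : ℕ} (j i : Fin m) : ℝ → ℝ := fun x =>
  if i < j then Real.sin x ^ 2 else if i = j then Real.cos x ^ 2 else 1

lemma fac_continuous {m : ℕ} (j i : Fin m) : Continuous (fac j i) := by
  unfold fac
  split_ifs
  · exact (Real.continuous_sin.pow 2)
  · exact (Real.continuous_cos.pow 2)
  · exact continuous_const

lemma fac_mem {m : ℕ} (j i : Fin m) (x : ℝ) : fac j i x ∈ Set.Icc (0:ℝ) 1 := by
  unfold fac
  split_ifs
  · exact ⟨sq_nonneg _, by nlinarith [Real.sin_le_one x, Real.neg_one_le_sin x]⟩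
  · exact ⟨sq_nonneg _, by nlinarith [Real.cos_le_one x, Real.neg_one_le_cos x]⟩
  · norm_num

lemma Lam_eq_prod (m : ℕ) (j : Fin m) (φ : Fin m → ℝ) :
    Lam m j φ = ∏ i, fac j i (φ i) := by
  unfold Lam fac
  rw [Finset.prod_ite]
  have h2 : (∏ i ∈ Finset.univ.filter (fun i : Fin m => ¬ i < j),
      (if i = j then Real.cos (φ i) ^ 2 else 1)) = Real.cos (φ j) ^ 2 := by
    rw [Finset.prod_ite_eq' (Finset.univ.filter (fun i : Fin m => ¬ i < j)) j
      (fun i => Real.cos (φ i) ^ 2)]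
    simp [lt_irrefl]
  rw [h2, mul_comm]


lemma mul_log_bound {t : ℝ} (h0 : 0 ≤ t) (h1 : t ≤ 1) : |t * Real.log t| ≤ 1 := by
  rcases eq_or_lt_of_le h0 with h | h
  · simp [← h]
  · have hlog : Real.log t ≤ 0 := Real.log_nonpos h.le h1
    have hb : Real.log (1/t) ≤ 1/t - 1 := Real.log_le_sub_one_of_pos (by positivity)
    rw [one_div, Real.log_inv] at hb
    have : -(t * Real.log t) ≤ 1 - t := by
      have := mul_le_mul_of_nonneg_left hb h0
      calc -(t * Real.log t) = t * (-Real.log t) := by ring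
        _ ≤ t * (t⁻¹ - 1) := this
        _ = 1 - t := by field_simp
    rw [abs_of_nonpos (mul_nonpos_of_nonneg_of_nonpos h0 hlog)]
    linarith

noncomputable def gfun {m : ℕ} (j k i : Fin m) : ℝ → ℝ := fun x =>
  if i = k then fac j i x * Real.log (fac j i x) else fac j i x

lemma gfun_continuous {m : ℕ} (j k i : Fin m) : Continuous (gfun j k i) := by
  unfold gfun
  split_ifs
  · exact Real.continuous_mul_log.comp (fac_continuous j i)
  · exact fac_continuous j i

lemma gfun_bound {m : ℕ} (j k i : Fin m) (x : ℝ) : |gfun j k i x| ≤ 1 := by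
  unfold gfun
  obtain ⟨h0, h1⟩ := fac_mem j i x
  split_ifs
  · exact mul_log_bound h0 h1
  · rw [abs_of_nonneg h0]; exact h1

lemma integral_gfun {m : ℕ} (j k i : Fin m) :
    ∫ x, gfun j k i x ∂uniformHalfPi
      = if i = k then (if i ≤ j then (1/2 - Real.log 2) else 0)
        else (if i ≤ j then (1/2:ℝ) else 1) := by
  rcases eq_or_ne i k with hik | hik <;> rcases lt_trichotomy i j with h | h | h
  · simp only [gfun, fac, if_pos hik, if_pos h, if_pos h.le]
    exact uhp_sin_sq_log
  · subst h
    simp only [gfun, fac, if_pos hik, lt_self_iff_false, if_false, if_pos rfl, le_refl, if_true]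
    exact uhp_cos_sq_log
  · simp only [gfun, fac, if_pos hik, if_neg (asymm h), if_neg (ne_of_gt h), if_neg (not_le.2 h)]
    simp
  · simp only [gfun, fac, if_neg hik, if_pos h, if_pos h.le]
    exact uhp_sin_sq
  · subst h
    simp only [gfun, fac, if_neg hik, lt_self_iff_false, if_false, if_pos rfl, le_refl, if_true]
    exact uhp_cos_sq
  · simp only [gfun, fac, if_neg hik, if_neg (asymm h), if_neg (ne_of_gt h), if_neg (not_le.2 h)]
    simp

lemma card_le_filter {m : ℕ} (j : Fin m) :
    (Finset.univ.filter (fun i : Fin m => i ≤ j)).card = (j:ℕ) + 1 := by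
  have h : Finset.univ.filter (fun i : Fin m => i ≤ j) = Finset.Iic j := by
    ext i; simp
  rw [h, Fin.card_Iic]

lemma prod_vfun {m : ℕ} (j k : Fin m) :
    (∏ i, if i = k then (if i ≤ j then (1/2 - Real.log 2) else 0)
        else (if i ≤ j then (1/2:ℝ) else 1))
      = if k ≤ j then (1/2 - Real.log 2) * (1/2)^(j:ℕ) else 0 := by
  rcases le_or_gt k j with hkj | hkj
  · rw [if_pos hkj]
    rw [← Finset.mul_prod_erase Finset.univ _ (Finset.mem_univ k)]
    rw [if_pos rfl, if_pos hkj]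
    have herase : (∏ i ∈ Finset.univ.erase k,
        if i = k then (if i ≤ j then (1/2 - Real.log 2) else 0)
          else (if i ≤ j then (1/2:ℝ) else 1))
        = ∏ i ∈ Finset.univ.erase k, (if i ≤ j then (1/2:ℝ) else 1) :=
      Finset.prod_congr rfl (fun i hi => if_neg (Finset.ne_of_mem_erase hi))
    rw [herase]
    have huniv : (∏ i, if i ≤ j then (1/2:ℝ) else 1) = (1/2)^((j:ℕ)+1) := by
      rw [Finset.prod_ite, Finset.prod_const, Finset.prod_const, one_pow, mul_one, card_le_filter]
    have hsplit := Finset.mul_prod_erase Finset.univ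
      (fun i : Fin m => if i ≤ j then (1/2:ℝ) else 1) (Finset.mem_univ k)
    rw [huniv] at hsplit
    simp only [if_pos hkj] at hsplit
    have : (∏ i ∈ Finset.univ.erase k, (if i ≤ j then (1/2:ℝ) else 1)) = (1/2)^(j:ℕ) := by
      have h2 : ((1:ℝ)/2)^((j:ℕ)+1) = (1/2) * (1/2)^(j:ℕ) := by ring
      rw [h2] at hsplit
      have := mul_left_cancel₀ (by norm_num : (1:ℝ)/2 ≠ 0) hsplit.symm
      linarith [this]
    rw [this]
  · rw [if_neg (not_le.2 hkj)]
    apply Finset.prod_eq_zero (Finset.mem_univ k)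
    rw [if_pos rfl, if_neg (not_le.2 hkj)]

lemma Fexp_eq (m : ℕ) (j : Fin m) :
    Fexp m j = (((j:ℕ):ℝ) + 1) * (1/2 - Real.log 2) / 2^(j:ℕ) := by
  have hrw : ∀ φ : Fin m → ℝ, Lam m j φ * Real.log (Lam m j φ)
      = ∑ k, ∏ i, gfun j k i (φ i) := by
    intro φ
    rw [Lam_eq_prod]
    exact prod_mul_log (fun i => fac j i (φ i))
  have hInt : ∀ k : Fin m, Integrable (fun φ : Fin m → ℝ => ∏ i, gfun j k i (φ i))
      (Measure.pi fun _ : Fin m => uniformHalfPi) := by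
    intro k
    have hcont : Continuous (fun φ : Fin m → ℝ => ∏ i, gfun j k i (φ i)) :=
      continuous_finset_prod _ (fun i _ => (gfun_continuous j k i).comp (continuous_apply i))
    apply Integrable.mono' (integrable_const (1:ℝ)) hcont.aestronglyMeasurable
    refine Filter.Eventually.of_forall (fun φ => ?_)
    rw [Real.norm_eq_abs, Finset.abs_prod]
    apply Finset.prod_le_one (fun i _ => abs_nonneg _) (fun i _ => gfun_bound j k i (φ i))
  calc Fexp m j = ∫ φ : Fin m → ℝ, ∑ k, ∏ i, gfun j k i (φ i)
        ∂(Measure.pi fun _ : Fin m => uniformHalfPi) := by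
        unfold Fexp; exact integral_congr_ae (Filter.Eventually.of_forall hrw)
    _ = ∑ k, ∫ φ : Fin m → ℝ, ∏ i, gfun j k i (φ i)
        ∂(Measure.pi fun _ : Fin m => uniformHalfPi) :=
        integral_finset_sum _ (fun k _ => hInt k)
    _ = ∑ k, ∏ i, ∫ x, gfun j k i x ∂uniformHalfPi := by
        refine Finset.sum_congr rfl (fun k _ => ?_)
        exact integral_pi_prod m (fun i => gfun j k i)
    _ = ∑ k : Fin m, if k ≤ j then (1/2 - Real.log 2) * (1/2)^(j:ℕ) else 0 := by
        refine Finset.sum_congr rfl (fun k _ => ?_)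
        simp only [integral_gfun]
        exact prod_vfun j k
    _ = (((j:ℕ):ℝ) + 1) * (1/2 - Real.log 2) / 2^(j:ℕ) := by
        rw [Finset.sum_ite, Finset.sum_const, Finset.sum_const_zero, add_zero, card_le_filter,
          nsmul_eq_mul]
        push_cast
        rw [div_pow, one_pow]
        ring

end AuxProofs

/-- For `1 ≤ j` with `j + 1 ≤ n - 1` (1-based paper indices), the recursion
`F_{j+1} = F_j / 2 − a / 2^j` holds, where `a = ln 2 − 1/2`.  In 0-based indices, paper
`F_{j+1}` is `Fexp (n-1) ⟨j, _⟩` and paper `F_j` is `Fexp (n-1) ⟨j-1, _⟩`. -/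
theorem stmt_11 (n : ℕ) (hn : 2 ≤ n) (j : ℕ) (hj1 : 1 ≤ j) (hj2 : j + 1 ≤ n - 1) :
    Fexp (n - 1) ⟨j, by omega⟩ =
      Fexp (n - 1) ⟨j - 1, by omega⟩ / 2 - (Real.log 2 - 1 / 2) / 2 ^ j := by
  have h1 := Fexp_eq (n-1) ⟨j, by omega⟩
  have h2 := Fexp_eq (n-1) ⟨j-1, by omega⟩
  simp only [Fin.val_mk] at h1 h2
  rw [h1, h2]
  obtain ⟨i, rfl⟩ : ∃ i, j = i + 1 := ⟨j - 1, by omega⟩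
  simp only [Nat.add_sub_cancel]
  push_cast
  rw [pow_succ]
  have h2i : (2:ℝ)^i ≠ 0 := by positivity
  field_simp
  ring
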